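/- arXiv:2202.12958 — 4 statements merged into one kernel-verified Lean document; each statement's English description precedes it below -/
import Mathlib

section
/- Under the causal setup below, for every bounded measurable function μ̃ : 𝒲 → ℝ one has E[ T·(c − μ̃(W)) / e₁(W) + μ̃(W) ] = E[ c(1) ]. (Unbiasedness of the augmented inverse probability weighting (AIPW) score with the true propensity score and an arbitrary outcome model.) -/
open MeasureTheory ProbabilityTheory

/-- Key lemma: if `f` is integrable, `g` is `{0,1}`-valued, and `f`, `g` are conditionally
independent given `m`, then `E[g f | m] = E[g|m] E[f|m]`. -/
lemma condexp_mul_of_condIndepFun_indicator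
    {Ω : Type*} {m : MeasurableSpace Ω} [mΩ : MeasurableSpace Ω] [StandardBorelSpace Ω]
    (hm : m ≤ mΩ)
    (μ : Measure Ω) [IsProbabilityMeasure μ]
    (f g : Ω → ℝ) (hf : Measurable f) (hg : Measurable g)
    (hfi : Integrable f μ) (hg01 : ∀ ω, g ω = 0 ∨ g ω = 1)
    (hind : CondIndepFun m hm f g μ) :
    μ[fun ω => g ω * f ω | m] =ᵐ[μ] fun ω => (μ[g|m]) ω * (μ[f|m]) ω := by
  set κ := condExpKernel μ m with hκ
  set A : Set Ω := g ⁻¹' {1} with hAdef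
  have hA : MeasurableSet A := hg (measurableSet_singleton 1)
  have hgA : ∀ ω, g ω = A.indicator (fun _ => (1:ℝ)) ω := by
    intro ω
    rcases hg01 ω with h0 | h1
    · have : ω ∉ A := by simp [hAdef, h0]
      simp [Set.indicator_of_notMem this, h0]
    · have : ω ∈ A := by simp [hAdef, h1]
      simp [Set.indicator_of_mem this, h1]
  have hgf : ∀ ω, g ω * f ω = A.indicator f ω := by
    intro ω
    rcases hg01 ω with h0 | h1
    · have : ω ∉ A := by simp [hAdef, h0]
      simp [Set.indicator_of_notMem this, h0]
    · have : ω ∈ A := by simp [hAdef, h1]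
      simp [Set.indicator_of_mem this, h1]
  -- integrability facts
  have hgi : Integrable g μ := by
    refine (integrable_const (1:ℝ)).mono' hg.aestronglyMeasurable ?_
    refine Filter.Eventually.of_forall fun ω => ?_
    rcases hg01 ω with h | h <;> simp [h]
  have hgfi : Integrable (fun ω => g ω * f ω) μ := by
    refine hfi.norm.mono' (hg.mul hf).aestronglyMeasurable ?_
    refine Filter.Eventually.of_forall fun ω => ?_
    rcases hg01 ω with h | h <;> simp [h, abs_nonneg]
  -- kernel independence on the countable π-system
  have hk : Kernel.IndepFun f g κ (μ.trim hm) := hind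
  have hq : ∀ q : ℚ, ∀ᵐ ω ∂μ,
      κ ω (f ⁻¹' Set.Iic (q:ℝ) ∩ A) = κ ω (f ⁻¹' Set.Iic (q:ℝ)) * κ ω A := by
    intro q
    exact ae_of_ae_trim hm
      (hk.measure_inter_preimage_eq_mul (Set.Iic (q:ℝ)) {1} measurableSet_Iic
        (measurableSet_singleton 1))
  have hqa : ∀ᵐ ω ∂μ, ∀ q : ℚ,
      κ ω (f ⁻¹' Set.Iic (q:ℝ) ∩ A) = κ ω (f ⁻¹' Set.Iic (q:ℝ)) * κ ω A :=
    (ae_all_iff).mpr hq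
  have hfk : ∀ᵐ ω ∂μ, Integrable f (κ ω) := hfi.condExpKernel_ae
  -- main pointwise identity for good ω
  have hmain : ∀ᵐ ω ∂μ,
      ∫ y, g y * f y ∂(κ ω) = (κ ω A).toReal * ∫ y, f y ∂(κ ω) := by
    filter_upwards [hqa, hfk] with ω hω hfint
    -- two measures on ℝ agreeing on Iic of rationals
    have hmeq : Measure.map f ((κ ω).restrict A)
        = (κ ω A) • Measure.map f (κ ω) := by
      haveI : IsFiniteMeasure (Measure.map f ((κ ω).restrict A)) :=
        Measure.isFiniteMeasure_map _ _
      refine ext_of_generate_finite (⋃ a : ℚ, {Set.Iic (a:ℝ)})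
        (BorelSpace.measurable_eq.trans Real.borel_eq_generateFrom_Iic_rat)
        Real.isPiSystem_Iic_rat ?_ ?_
      · intro s hs
        simp only [Set.mem_iUnion, Set.mem_singleton_iff] at hs
        obtain ⟨q, rfl⟩ := hs
        rw [Measure.map_apply hf measurableSet_Iic,
          Measure.restrict_apply (hf measurableSet_Iic),
          Measure.smul_apply, Measure.map_apply hf measurableSet_Iic,
          smul_eq_mul, hω q, mul_comm]
      · rw [Measure.map_apply hf MeasurableSet.univ,
          Measure.restrict_apply (hf MeasurableSet.univ),
          Measure.smul_apply, Measure.map_apply hf MeasurableSet.univ,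
          smul_eq_mul]
        simp
    calc ∫ y, g y * f y ∂(κ ω) = ∫ y, A.indicator f y ∂(κ ω) := by
          exact integral_congr_ae (Filter.Eventually.of_forall hgf)
      _ = ∫ y in A, f y ∂(κ ω) := integral_indicator hA
      _ = ∫ x, x ∂(Measure.map f ((κ ω).restrict A)) :=
          (integral_map hf.aemeasurable aestronglyMeasurable_id).symm
      _ = ∫ x, x ∂((κ ω A) • Measure.map f (κ ω)) := by rw [hmeq]
      _ = (κ ω A).toReal • ∫ x, x ∂(Measure.map f (κ ω)) := integral_smul_measure _ _
      _ = (κ ω A).toReal * ∫ y, f y ∂(κ ω) := by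
          rw [smul_eq_mul]
          congr 1
          exact integral_map hf.aemeasurable aestronglyMeasurable_id
  -- the integral of g w.r.t. the kernel
  have hgk : ∀ ω, ∫ y, g y ∂(κ ω) = (κ ω A).toReal := by
    intro ω
    calc ∫ y, g y ∂(κ ω) = ∫ y, A.indicator (fun _ => (1:ℝ)) y ∂(κ ω) :=
          integral_congr_ae (Filter.Eventually.of_forall hgA)
      _ = (κ ω A).toReal • (1:ℝ) := integral_indicator_const (1:ℝ) hA
      _ = (κ ω A).toReal := by rw [smul_eq_mul, mul_one]
  -- conditional expectations as kernel integrals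
  have h1 : μ[fun ω => g ω * f ω | m] =ᵐ[μ] fun ω => ∫ y, g y * f y ∂(κ ω) :=
    condExp_ae_eq_integral_condExpKernel hm hgfi
  have h2 : μ[f|m] =ᵐ[μ] fun ω => ∫ y, f y ∂(κ ω) :=
    condExp_ae_eq_integral_condExpKernel hm hfi
  have h3 : μ[g|m] =ᵐ[μ] fun ω => ∫ y, g y ∂(κ ω) :=
    condExp_ae_eq_integral_condExpKernel hm hgi
  filter_upwards [h1, h2, h3, hmain] with ω e1 e2 e3 emain
  rw [e1, e2, e3, emain, hgk ω]

/-- **AIPW unbiasedness with the true propensity score.** Under ignorability and overlap,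
for every bounded measurable outcome model `μ̃ : 𝒲 → ℝ`,
`E[T (c − μ̃(W))/e₁(W) + μ̃(W)] = E[c(1)]`, where `c = T c(1) + (1−T) c(0)`. -/
theorem aipw_unbiased_true_propensity
    {Ω 𝒲 : Type*} [MeasurableSpace Ω] [StandardBorelSpace Ω] [MeasurableSpace 𝒲]
    (μ : Measure Ω) [IsProbabilityMeasure μ]
    (W : Ω → 𝒲) (hW : Measurable W)
    (T : Ω → ℝ) (hTm : Measurable T) (hT01 : ∀ ω, T ω = 0 ∨ T ω = 1)
    (c0 c1 : Ω → ℝ) (hc0m : Measurable c0) (hc1m : Measurable c1)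
    (hc0 : Integrable c0 μ) (hc1 : Integrable c1 μ)
    -- Ignorability: (c(0), c(1)) ⫫ T | W
    (hindep : CondIndepFun (MeasurableSpace.comap W inferInstance)
      (measurable_iff_comap_le.mp hW) (fun ω => (c0 ω, c1 ω)) T μ)
    -- Propensity score: e₁(W) is a version of E[T | W]
    (e1 : 𝒲 → ℝ) (he1m : Measurable e1)
    (he1 : μ[T | MeasurableSpace.comap W inferInstance] =ᵐ[μ] fun ω => e1 (W ω))
    -- Overlap
    (η : ℝ) (hη0 : 0 < η) (hη2 : η < 1 / 2)
    (hover : ∀ᵐ ω ∂μ, η ≤ e1 (W ω) ∧ e1 (W ω) ≤ 1 - η) :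
    ∀ μtil : 𝒲 → ℝ, Measurable μtil → (∃ B : ℝ, ∀ w, |μtil w| ≤ B) →
      ∫ ω, (T ω * (T ω * c1 ω + (1 - T ω) * c0 ω - μtil (W ω)) / e1 (W ω) + μtil (W ω)) ∂μ
        = ∫ ω, c1 ω ∂μ := by
  intro μtil hμtm hμtB
  obtain ⟨B, hB⟩ := hμtB
  have hm := measurable_iff_comap_le.mp hW
  -- measurability wrt the comap σ-algebra
  have hWm : Measurable[MeasurableSpace.comap W inferInstance] W := fun s hs => ⟨s, hs, rfl⟩
  have he1Wm : Measurable[MeasurableSpace.comap W inferInstance] (fun ω => e1 (W ω)) :=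
    he1m.comp hWm
  have hψm : Measurable[MeasurableSpace.comap W inferInstance] (fun ω => (e1 (W ω))⁻¹) :=
    he1Wm.inv
  have hμtWm : Measurable[MeasurableSpace.comap W inferInstance] (fun ω => μtil (W ω)) :=
    hμtm.comp hWm
  -- ambient measurability
  have he1W : Measurable (fun ω => e1 (W ω)) := he1m.comp hW
  have hμtW : Measurable (fun ω => μtil (W ω)) := hμtm.comp hW
  -- basic bounds
  have hT1 : ∀ ω, |T ω| ≤ 1 := by
    intro ω; rcases hT01 ω with h | h <;> simp [h]
  have hBnn : ∀ ω : Ω, (0:ℝ) ≤ B := fun ω => (abs_nonneg _).trans (hB (W ω))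
  have hc1μt : ∀ ω, |c1 ω - μtil (W ω)| ≤ |c1 ω| + B := by
    intro ω
    refine (abs_sub _ _).trans ?_
    exact add_le_add le_rfl (hB (W ω))
  have hψb : ∀ᵐ ω ∂μ, |(e1 (W ω))⁻¹| ≤ η⁻¹ ∧ (e1 (W ω))⁻¹ * e1 (W ω) = 1 := by
    filter_upwards [hover] with ω hω
    have hpos : 0 < e1 (W ω) := lt_of_lt_of_le hη0 hω.1
    constructor
    · rw [abs_of_nonneg (inv_nonneg.mpr hpos.le)]
      exact inv_anti₀ hη0 hω.1
    · exact inv_mul_cancel₀ hpos.ne'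
  -- integrability facts
  have hμtW_int : Integrable (fun ω => μtil (W ω)) μ := by
    refine (integrable_const B).mono' hμtW.aestronglyMeasurable ?_
    exact Filter.Eventually.of_forall fun ω => by
      simpa [Real.norm_eq_abs] using hB (W ω)
  have hT_int : Integrable T μ := by
    refine (integrable_const (1:ℝ)).mono' hTm.aestronglyMeasurable ?_
    exact Filter.Eventually.of_forall fun ω => by simpa [Real.norm_eq_abs] using hT1 ω
  have hdom : Integrable (fun ω => (|c1 ω| + B) * η⁻¹) μ :=
    (hc1.abs.add (integrable_const B)).mul_const _
  have hTh_int : Integrable (fun ω => T ω * (c1 ω - μtil (W ω))) μ := by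
    refine (hc1.abs.add (integrable_const B)).mono'
      ((hTm.mul (hc1m.sub hμtW)).aestronglyMeasurable) ?_
    refine Filter.Eventually.of_forall fun ω => ?_
    rw [Real.norm_eq_abs, abs_mul]
    calc |T ω| * |c1 ω - μtil (W ω)| ≤ 1 * (|c1 ω| + B) :=
          mul_le_mul (hT1 ω) (hc1μt ω) (abs_nonneg _) zero_le_one
      _ = |c1 ω| + B := one_mul _
  have hTc1_int : Integrable (fun ω => T ω * c1 ω) μ := by
    refine hc1.abs.mono' ((hTm.mul hc1m).aestronglyMeasurable) ?_
    refine Filter.Eventually.of_forall fun ω => ?_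
    rw [Real.norm_eq_abs, abs_mul]
    calc |T ω| * |c1 ω| ≤ 1 * |c1 ω| :=
          mul_le_mul_of_nonneg_right (hT1 ω) (abs_nonneg _)
      _ = |c1 ω| := one_mul _
  have hμtT_int : Integrable (fun ω => μtil (W ω) * T ω) μ := by
    refine (integrable_const B).mono' ((hμtW.mul hTm).aestronglyMeasurable) ?_
    refine Filter.Eventually.of_forall fun ω => ?_
    rw [Real.norm_eq_abs, abs_mul]
    calc |μtil (W ω)| * |T ω| ≤ B * 1 :=
          mul_le_mul (hB (W ω)) (hT1 ω) (abs_nonneg _) (hBnn ω)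
      _ = B := mul_one _
  have hG_int : Integrable (fun ω => T ω * (c1 ω - μtil (W ω)) * (e1 (W ω))⁻¹) μ := by
    refine hdom.mono'
      (((hTm.mul (hc1m.sub hμtW)).mul he1W.inv).aestronglyMeasurable) ?_
    filter_upwards [hψb] with ω hψ
    rw [Real.norm_eq_abs, abs_mul, abs_mul]
    refine mul_le_mul ?_ hψ.1 (abs_nonneg _) (add_nonneg (abs_nonneg _) (hBnn ω))
    calc |T ω| * |c1 ω - μtil (W ω)| ≤ 1 * (|c1 ω| + B) :=
          mul_le_mul (hT1 ω) (hc1μt ω) (abs_nonneg _) zero_le_one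
      _ = |c1 ω| + B := one_mul _
  -- conditional independence of c1 and T
  have hc1T : CondIndepFun (MeasurableSpace.comap W inferInstance) hm c1 T μ :=
    hindep.comp measurable_snd measurable_id
  -- the key conditional expectation identities
  have hkey : μ[fun ω => T ω * c1 ω | MeasurableSpace.comap W inferInstance]
      =ᵐ[μ] fun ω => (μ[T | MeasurableSpace.comap W inferInstance]) ω
        * (μ[c1 | MeasurableSpace.comap W inferInstance]) ω :=
    condexp_mul_of_condIndepFun_indicator hm μ c1 T hc1m hTm hc1 hT01 hc1T
  have hstepA : μ[fun ω => T ω * (c1 ω - μtil (W ω)) * (e1 (W ω))⁻¹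
        | MeasurableSpace.comap W inferInstance]
      =ᵐ[μ] (fun ω => (e1 (W ω))⁻¹)
        * μ[fun ω => T ω * (c1 ω - μtil (W ω)) | MeasurableSpace.comap W inferInstance] := by
    have heq : (fun ω => T ω * (c1 ω - μtil (W ω)) * (e1 (W ω))⁻¹)
        = (fun ω => (e1 (W ω))⁻¹) * (fun ω => T ω * (c1 ω - μtil (W ω))) := by
      funext ω; simp [mul_comm]
    rw [heq]
    refine condExp_mul_of_stronglyMeasurable_left hψm.stronglyMeasurable ?_ hTh_int
    rw [← heq]; exact hG_int
  have hstepB : μ[fun ω => T ω * (c1 ω - μtil (W ω)) | MeasurableSpace.comap W inferInstance]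
      =ᵐ[μ] μ[fun ω => T ω * c1 ω | MeasurableSpace.comap W inferInstance]
        - μ[fun ω => μtil (W ω) * T ω | MeasurableSpace.comap W inferInstance] := by
    have heq : (fun ω => T ω * (c1 ω - μtil (W ω)))
        = (fun ω => T ω * c1 ω) - (fun ω => μtil (W ω) * T ω) := by
      funext ω; simp [Pi.sub_apply]; ring
    rw [heq]
    exact condExp_sub hTc1_int hμtT_int _
  have hstepD : μ[fun ω => μtil (W ω) * T ω | MeasurableSpace.comap W inferInstance]
      =ᵐ[μ] fun ω => μtil (W ω) * (μ[T | MeasurableSpace.comap W inferInstance]) ω := by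
    have h := condExp_mul_of_stronglyMeasurable_left (μ := μ) hμtWm.stronglyMeasurable
      (g := T) hμtT_int hT_int
    exact h
  -- combine: E[G | W] = E[c1 | W] - μtil ∘ W  a.e.
  have hfinal : μ[fun ω => T ω * (c1 ω - μtil (W ω)) * (e1 (W ω))⁻¹
        | MeasurableSpace.comap W inferInstance]
      =ᵐ[μ] fun ω => (μ[c1 | MeasurableSpace.comap W inferInstance]) ω - μtil (W ω) := by
    filter_upwards [hstepA, hstepB, hstepD, hkey, he1, hψb] with ω hA hBe hD hk he hψ
    rw [hA]
    simp only [Pi.mul_apply, Pi.sub_apply] at *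
    rw [hBe, hD, hk, he]
    have : (e1 (W ω))⁻¹ * (e1 (W ω) * (μ[c1 | MeasurableSpace.comap W inferInstance]) ω
        - μtil (W ω) * e1 (W ω))
        = ((e1 (W ω))⁻¹ * e1 (W ω))
          * ((μ[c1 | MeasurableSpace.comap W inferInstance]) ω - μtil (W ω)) := by ring
    rw [this, hψ.2, one_mul]
  -- rewrite the integrand pointwise
  have hpt : ∀ ω, T ω * (T ω * c1 ω + (1 - T ω) * c0 ω - μtil (W ω)) / e1 (W ω) + μtil (W ω)
      = T ω * (c1 ω - μtil (W ω)) * (e1 (W ω))⁻¹ + μtil (W ω) := by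
    intro ω
    rcases hT01 ω with h | h <;> simp [h, div_eq_mul_inv] <;> ring
  calc ∫ ω, (T ω * (T ω * c1 ω + (1 - T ω) * c0 ω - μtil (W ω)) / e1 (W ω) + μtil (W ω)) ∂μ
      = ∫ ω, (T ω * (c1 ω - μtil (W ω)) * (e1 (W ω))⁻¹ + μtil (W ω)) ∂μ := by
        exact integral_congr_ae (Filter.Eventually.of_forall fun ω => hpt ω)
    _ = (∫ ω, T ω * (c1 ω - μtil (W ω)) * (e1 (W ω))⁻¹ ∂μ) + ∫ ω, μtil (W ω) ∂μ :=
        integral_add hG_int hμtW_int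
    _ = (∫ ω, (μ[fun ω => T ω * (c1 ω - μtil (W ω)) * (e1 (W ω))⁻¹
          | MeasurableSpace.comap W inferInstance]) ω ∂μ) + ∫ ω, μtil (W ω) ∂μ := by
        rw [integral_condExp hm]
    _ = (∫ ω, ((μ[c1 | MeasurableSpace.comap W inferInstance]) ω - μtil (W ω)) ∂μ)
          + ∫ ω, μtil (W ω) ∂μ := by
        rw [integral_congr_ae hfinal]
    _ = ((∫ ω, (μ[c1 | MeasurableSpace.comap W inferInstance]) ω ∂μ) - ∫ ω, μtil (W ω) ∂μ)
          + ∫ ω, μtil (W ω) ∂μ :=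
        congrArg (· + ∫ ω, μtil (W ω) ∂μ) (integral_sub integrable_condExp hμtW_int)
    _ = ∫ ω, (μ[c1 | MeasurableSpace.comap W inferInstance]) ω ∂μ := by ring
    _ = ∫ ω, c1 ω ∂μ := integral_condExp hm
end

section
/- Under the causal setup below, let μ₁(W) = E[c(1) | W] be a version of the true conditional outcome mean, and let ẽ : 𝒲 → ℝ be any measurable function with ẽ(W) ≥ η' almost surely for some constant η' > 0, such that T·(c − μ₁(W))/ẽ(W) is integrable. Then E[ T·(c − μ₁(W)) / ẽ(W) + μ₁(W) ] = E[ c(1) ]. (Unbiasedness of the AIPW score with the true outcome model and an arbitrary weighting function: together with the previous direction this is double robustness.) -/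
open MeasureTheory ProbabilityTheory

private theorem aux_pullout {Ω : Type*} {m m0 : MeasurableSpace Ω} (hm : m ≤ m0)
    (μ : Measure Ω) [IsFiniteMeasure μ] {f g : Ω → ℝ} (hf : StronglyMeasurable[m] f)
    (hfg : Integrable (fun ω => f ω * g ω) μ) (hg : Integrable g μ) :
    ∫ ω, f ω * g ω ∂μ = ∫ ω, f ω * (μ[g|m]) ω ∂μ := by
  have h := condExp_mul_of_stronglyMeasurable_left (μ := μ) hf hfg hg
  calc ∫ ω, f ω * g ω ∂μ
      = ∫ ω, (μ[fun ω => f ω * g ω|m]) ω ∂μ := (integral_condExp hm).symm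
    _ = ∫ ω, f ω * (μ[g|m]) ω ∂μ := by
        refine integral_congr_ae ?_
        filter_upwards [h] with ω hω
        exact hω

private theorem aux_pullout_zero {Ω : Type*} {m m0 : MeasurableSpace Ω} (hm : m ≤ m0)
    (μ : Measure Ω) [IsFiniteMeasure μ] {f g : Ω → ℝ} (hf : StronglyMeasurable[m] f)
    (hfg : Integrable (fun ω => f ω * g ω) μ) (hg : Integrable g μ)
    (h0 : μ[g|m] =ᵐ[μ] 0) : ∫ ω, f ω * g ω ∂μ = 0 := by
  rw [aux_pullout hm μ hf hfg hg]
  refine integral_eq_zero_of_ae ?_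
  filter_upwards [h0] with ω hω
  simp [hω]


/-- **AIPW unbiasedness with the true outcome model.** Under ignorability and overlap, if
`μ₁(W)` is a version of `E[c(1) | W]` and `ẽ : 𝒲 → ℝ` is measurable with `ẽ(W) ≥ η' > 0`
a.s. and `T (c − μ₁(W)) / ẽ(W)` is integrable, then
`E[T (c − μ₁(W))/ẽ(W) + μ₁(W)] = E[c(1)]`, where `c = T c(1) + (1−T) c(0)`. -/
theorem aipw_unbiased_true_outcome_model
    {Ω 𝒲 : Type*} [MeasurableSpace Ω] [StandardBorelSpace Ω] [MeasurableSpace 𝒲]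
    (μ : Measure Ω) [IsProbabilityMeasure μ]
    (W : Ω → 𝒲) (hW : Measurable W)
    (T : Ω → ℝ) (hTm : Measurable T) (hT01 : ∀ ω, T ω = 0 ∨ T ω = 1)
    (c0 c1 : Ω → ℝ) (hc0m : Measurable c0) (hc1m : Measurable c1)
    (hc0 : Integrable c0 μ) (hc1 : Integrable c1 μ)
    -- Ignorability: (c(0), c(1)) ⫫ T | W
    (hindep : CondIndepFun (MeasurableSpace.comap W inferInstance)
      (measurable_iff_comap_le.mp hW) (fun ω => (c0 ω, c1 ω)) T μ)
    -- Propensity score: e₁(W) is a version of E[T | W]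
    (e1 : 𝒲 → ℝ) (he1m : Measurable e1)
    (he1 : μ[T | MeasurableSpace.comap W inferInstance] =ᵐ[μ] fun ω => e1 (W ω))
    -- Overlap
    (η : ℝ) (hη0 : 0 < η) (hη2 : η < 1 / 2)
    (hover : ∀ᵐ ω ∂μ, η ≤ e1 (W ω) ∧ e1 (W ω) ≤ 1 - η)
    -- μ₁(W) is a measurable version of the conditional mean E[c(1) | W]
    (μ₁ : 𝒲 → ℝ) (hμ₁m : Measurable μ₁)
    (hμ₁ : μ[c1 | MeasurableSpace.comap W inferInstance] =ᵐ[μ] fun ω => μ₁ (W ω))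
    -- arbitrary weighting function bounded away from zero
    (etil : 𝒲 → ℝ) (hetilm : Measurable etil)
    (η' : ℝ) (hη' : 0 < η') (hetil : ∀ᵐ ω ∂μ, η' ≤ etil (W ω))
    (hint : Integrable
      (fun ω => T ω * (T ω * c1 ω + (1 - T ω) * c0 ω - μ₁ (W ω)) / etil (W ω)) μ) :
    ∫ ω, (T ω * (T ω * c1 ω + (1 - T ω) * c0 ω - μ₁ (W ω)) / etil (W ω) + μ₁ (W ω)) ∂μ
      = ∫ ω, c1 ω ∂μ := by

  have hm' : MeasurableSpace.comap W inferInstance ≤ ‹MeasurableSpace Ω› := hW.comap_le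
  have hm'' : MeasurableSpace.comap c1 inferInstance ≤ ‹MeasurableSpace Ω› := hc1m.comap_le
  have hWm' : Measurable[(MeasurableSpace.comap W inferInstance)] W := measurable_iff_comap_le.mpr le_rfl
  have hc1m'' : Measurable[(MeasurableSpace.comap c1 inferInstance)] c1 := measurable_iff_comap_le.mpr le_rfl
  set k : Ω → ℝ := fun ω => (etil (W ω))⁻¹ with hkdef
  -- measurability
  have hk_sm : StronglyMeasurable[(MeasurableSpace.comap W inferInstance)] k := (Measurable.stronglyMeasurable (hetilm.inv.comp hWm'))
  have he1W_sm : StronglyMeasurable[(MeasurableSpace.comap W inferInstance)] (fun ω => e1 (W ω)) :=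
    (he1m.comp hWm').stronglyMeasurable
  have hμ₁W_sm : StronglyMeasurable[(MeasurableSpace.comap W inferInstance)] (fun ω => μ₁ (W ω)) :=
    (hμ₁m.comp hWm').stronglyMeasurable
  have hc1_sm'' : StronglyMeasurable[(MeasurableSpace.comap c1 inferInstance)] c1 := hc1m''.stronglyMeasurable
  have hk_meas : AEStronglyMeasurable k μ := ((hetilm.comp hW).inv).aestronglyMeasurable
  -- a.e. bounds
  have hkb : ∀ᵐ ω ∂μ, ‖k ω‖ ≤ η'⁻¹ := by
    filter_upwards [hetil] with ω hω
    have hpos : (0:ℝ) < etil (W ω) := lt_of_lt_of_le hη' hω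
    rw [hkdef]
    rw [Real.norm_eq_abs, abs_of_nonneg (inv_nonneg.mpr hpos.le)]
    exact inv_anti₀ hη' hω
  have he1Wb : ∀ᵐ ω ∂μ, ‖e1 (W ω)‖ ≤ 1 := by
    filter_upwards [hover] with ω hω
    rw [Real.norm_eq_abs, abs_of_nonneg (le_trans hη0.le hω.1)]
    linarith [hω.2]
  have hTb : ∀ ω, ‖T ω‖ ≤ 1 := by
    intro ω; rcases hT01 ω with h | h <;> simp [h]
  -- integrability
  have hT_int : Integrable T μ :=
    (integrable_const (1:ℝ)).mono' hTm.aestronglyMeasurable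
      (Filter.Eventually.of_forall fun ω => by simpa using hTb ω)
  have hμ₁W_int : Integrable (fun ω => μ₁ (W ω)) μ := integrable_condExp.congr hμ₁
  have he1W_int : Integrable (fun ω => e1 (W ω)) μ := integrable_condExp.congr he1
  set h : Ω → ℝ := fun ω => (T ω - e1 (W ω)) * k ω with hhdef
  have hh_meas : AEStronglyMeasurable h μ :=
    ((hTm.sub (he1m.comp hW)).mul ((hetilm.comp hW).inv)).aestronglyMeasurable
  have hhb : ∀ᵐ ω ∂μ, ‖h ω‖ ≤ 2 * η'⁻¹ := by
    filter_upwards [hkb, he1Wb] with ω h1 h2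
    rw [hhdef]
    calc ‖(T ω - e1 (W ω)) * k ω‖ = ‖T ω - e1 (W ω)‖ * ‖k ω‖ := norm_mul _ _
      _ ≤ 2 * η'⁻¹ := by
          refine mul_le_mul ?_ h1 (norm_nonneg _) (by norm_num)
          calc ‖T ω - e1 (W ω)‖ ≤ ‖T ω‖ + ‖e1 (W ω)‖ := norm_sub_le _ _
            _ ≤ 2 := by linarith [hTb ω]
  have hh_int : Integrable h μ :=
    (integrable_const (2 * η'⁻¹)).mono' hh_meas hhb
  -- condexp vanishing facts over (MeasurableSpace.comap W inferInstance)
  have hcondT : μ[T|(MeasurableSpace.comap W inferInstance)] =ᵐ[μ] fun ω => e1 (W ω) := he1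
  have he1W_fix : μ[(fun ω => e1 (W ω))|(MeasurableSpace.comap W inferInstance)] = fun ω => e1 (W ω) :=
    condExp_of_stronglyMeasurable hm' he1W_sm he1W_int
  have hμ₁W_fix : μ[(fun ω => μ₁ (W ω))|(MeasurableSpace.comap W inferInstance)] = fun ω => μ₁ (W ω) :=
    condExp_of_stronglyMeasurable hm' hμ₁W_sm hμ₁W_int
  have hcz1 : μ[(fun ω => e1 (W ω) - T ω)|(MeasurableSpace.comap W inferInstance)] =ᵐ[μ] 0 := by
    have hsub := condExp_sub (μ := μ) (m := (MeasurableSpace.comap W inferInstance)) he1W_int hT_int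
    refine (condExp_congr_ae (Filter.Eventually.of_forall fun ω => rfl)).trans
      (hsub.trans ?_)
    filter_upwards [hcondT] with ω hω
    simp [he1W_fix, hω]
  have hcz2 : μ[(fun ω => c1 ω - μ₁ (W ω))|(MeasurableSpace.comap W inferInstance)] =ᵐ[μ] 0 := by
    have hsub := condExp_sub (μ := μ) (m := (MeasurableSpace.comap W inferInstance)) hc1 hμ₁W_int
    refine (condExp_congr_ae (Filter.Eventually.of_forall fun ω => rfl)).trans
      (hsub.trans ?_)
    filter_upwards [hμ₁] with ω hω
    simp [hμ₁W_fix, hω]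
  -- C1: set integrals of h over (MeasurableSpace.comap c1 inferInstance)-sets vanish
  have hset : ∀ s, MeasurableSet[(MeasurableSpace.comap c1 inferInstance)] s → ∫ ω in s, h ω ∂μ = 0 := by
    rintro s ⟨u, hu, rfl⟩
    set B : Set Ω := T ⁻¹' {1} with hBdef
    have hB := hTm (measurableSet_singleton (1:ℝ))
    have hsM := hc1m hu
    have hTeq : Set.indicator B (fun _ => (1:ℝ)) = T := by
      funext ω
      rcases hT01 ω with h0 | h1
      · simp [Set.indicator_apply, hBdef, Set.mem_preimage, h0]
      · simp [Set.indicator_apply, hBdef, Set.mem_preimage, h1]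
    have hpre : (fun ω => (c0 ω, c1 ω)) ⁻¹' (Set.univ ×ˢ u) = c1 ⁻¹' u := by
      ext ω; simp [Set.mem_prod]
    have hkey := (condIndepFun_iff_condExp_inter_preimage_eq_mul
      (hc0m.prodMk hc1m) hTm).mp hindep (Set.univ ×ˢ u) {1}
      (MeasurableSet.univ.prod hu) (measurableSet_singleton 1)
    rw [hpre] at hkey
    have hBe1 : (μ⟦B|(MeasurableSpace.comap W inferInstance)⟧) =ᵐ[μ] fun ω => e1 (W ω) := by
      rw [show (Set.indicator B fun _ => (1:ℝ)) = T from hTeq]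
      exact hcondT
    have hkey' : (μ⟦c1 ⁻¹' u ∩ B|(MeasurableSpace.comap W inferInstance)⟧) =ᵐ[μ]
        fun ω => (μ⟦c1 ⁻¹' u|(MeasurableSpace.comap W inferInstance)⟧) ω * e1 (W ω) := by
      refine hkey.trans ?_
      filter_upwards [hBe1] with ω hω
      rw [hω]
    have hind_int : Integrable (Set.indicator (c1 ⁻¹' u ∩ B) fun _ => (1:ℝ)) μ :=
      (integrable_const 1).indicator (hsM.inter hB)
    have hind_int2 : Integrable (Set.indicator (c1 ⁻¹' u) fun _ => (1:ℝ)) μ :=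
      (integrable_const 1).indicator hsM
    have hI1 : ∫ ω, k ω * (Set.indicator (c1 ⁻¹' u ∩ B) (fun _ => (1:ℝ)) ω) ∂μ
        = ∫ ω, k ω * ((μ⟦c1 ⁻¹' u|(MeasurableSpace.comap W inferInstance)⟧) ω * e1 (W ω)) ∂μ := by
      rw [aux_pullout hm' μ hk_sm
        (hind_int.bdd_mul hk_meas hkb) hind_int]
      refine integral_congr_ae ?_
      filter_upwards [hkey'] with ω hω
      rw [hω]
    have hke1b : ∀ᵐ ω ∂μ, ‖k ω * e1 (W ω)‖ ≤ η'⁻¹ * 1 := by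
      filter_upwards [hkb, he1Wb] with ω h1 h2
      calc ‖k ω * e1 (W ω)‖ = ‖k ω‖ * ‖e1 (W ω)‖ := norm_mul _ _
        _ ≤ η'⁻¹ * 1 := mul_le_mul h1 h2 (norm_nonneg _) (by positivity)
    have hint4 : Integrable
        (fun ω => (k ω * e1 (W ω)) * (Set.indicator (c1 ⁻¹' u) (fun _ => (1:ℝ)) ω)) μ :=
      hind_int2.bdd_mul (hk_meas.mul ((he1m.comp hW).aestronglyMeasurable)) hke1b
    have hI2 : ∫ ω, (k ω * e1 (W ω)) * (Set.indicator (c1 ⁻¹' u) (fun _ => (1:ℝ)) ω) ∂μ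
        = ∫ ω, (k ω * e1 (W ω)) * (μ⟦c1 ⁻¹' u|(MeasurableSpace.comap W inferInstance)⟧) ω ∂μ :=
      aux_pullout hm' μ (hk_sm.mul he1W_sm) hint4 hind_int2
    have hsplit : ∫ ω in c1 ⁻¹' u, h ω ∂μ
        = ∫ ω, (k ω * (Set.indicator (c1 ⁻¹' u ∩ B) (fun _ => (1:ℝ)) ω)
            - (k ω * e1 (W ω)) * (Set.indicator (c1 ⁻¹' u) (fun _ => (1:ℝ)) ω)) ∂μ := by
      rw [← integral_indicator hsM]
      refine integral_congr_ae (Filter.Eventually.of_forall fun ω => ?_)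
      by_cases hωs : ω ∈ c1 ⁻¹' u
      · rcases hT01 ω with h0 | h1
        · have hωB : ω ∉ B := by simp [hBdef, Set.mem_preimage, h0]
          simp [Set.indicator_of_mem, hωs, hhdef, Set.indicator_apply,
            Set.mem_inter_iff, hωB, h0]
          ring
        · have hωB : ω ∈ B := by simp [hBdef, Set.mem_preimage, h1]
          simp [Set.indicator_of_mem, hωs, hhdef, Set.indicator_apply,
            Set.mem_inter_iff, hωB, h1]
          ring
      · have : ω ∉ c1 ⁻¹' u ∩ B := fun hc => hωs hc.1
        simp [Set.indicator_of_notMem, hωs, this]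
    rw [hsplit, integral_sub (hind_int.bdd_mul hk_meas hkb) hint4, hI1, hI2]
    rw [sub_eq_zero]
    refine integral_congr_ae (Filter.Eventually.of_forall fun ω => ?_)
    ring
  -- C2: condexp of h given (MeasurableSpace.comap c1 inferInstance) vanishes
  have hE0 : μ[h|(MeasurableSpace.comap c1 inferInstance)] =ᵐ[μ] 0 := by
    refine (ae_eq_condExp_of_forall_setIntegral_eq hm'' hh_int
      (fun s _ _ => (integrable_zero _ _ _).integrableOn)
      (fun s hs _ => by rw [hset s hs]; simp)
      (StronglyMeasurable.aestronglyMeasurable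
        (@stronglyMeasurable_zero _ _ (MeasurableSpace.comap c1 inferInstance) _ _))).symm
  -- the three vanishing integrals
  have hint1 : Integrable (fun ω => c1 ω * h ω) μ :=
    (hc1.bdd_mul hh_meas hhb).congr (Filter.Eventually.of_forall fun ω => by ring)
  have ht1 : ∫ ω, c1 ω * h ω ∂μ = 0 :=
    aux_pullout_zero hm'' μ hc1_sm'' hint1 hh_int hE0
  have hksubb : ∀ᵐ ω ∂μ, ‖k ω * (e1 (W ω) - T ω)‖ ≤ η'⁻¹ * 2 := by
    filter_upwards [hkb, he1Wb] with ω h1 h2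
    calc ‖k ω * (e1 (W ω) - T ω)‖ = ‖k ω‖ * ‖e1 (W ω) - T ω‖ := norm_mul _ _
      _ ≤ η'⁻¹ * 2 := by
          refine mul_le_mul h1 ?_ (norm_nonneg _) (by positivity)
          calc ‖e1 (W ω) - T ω‖ ≤ ‖e1 (W ω)‖ + ‖T ω‖ := norm_sub_le _ _
            _ ≤ 2 := by linarith [hTb ω]
  have hint2 : Integrable (fun ω => (μ₁ (W ω) * k ω) * (e1 (W ω) - T ω)) μ :=
    (hμ₁W_int.bdd_mul
      ((hk_meas.mul (((he1m.comp hW).sub hTm).aestronglyMeasurable)).congr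
        (Filter.Eventually.of_forall fun ω => by simp [Function.comp])) hksubb).congr
      (Filter.Eventually.of_forall fun ω => by ring)
  have ht2 : ∫ ω, (μ₁ (W ω) * k ω) * (e1 (W ω) - T ω) ∂μ = 0 :=
    aux_pullout_zero hm' μ (hμ₁W_sm.mul hk_sm) hint2 (he1W_int.sub hT_int) hcz1
  have he1kb : ∀ᵐ ω ∂μ, ‖e1 (W ω) * k ω‖ ≤ 1 * η'⁻¹ := by
    filter_upwards [hkb, he1Wb] with ω h1 h2
    calc ‖e1 (W ω) * k ω‖ = ‖e1 (W ω)‖ * ‖k ω‖ := norm_mul _ _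
      _ ≤ 1 * η'⁻¹ := mul_le_mul h2 h1 (norm_nonneg _) (by norm_num)
  have hint3 : Integrable (fun ω => (e1 (W ω) * k ω) * (c1 ω - μ₁ (W ω))) μ :=
    (hc1.sub hμ₁W_int).bdd_mul
      (((he1m.comp hW).mul (hetilm.comp hW).inv).aestronglyMeasurable) he1kb
  have ht3 : ∫ ω, (e1 (W ω) * k ω) * (c1 ω - μ₁ (W ω)) ∂μ = 0 :=
    aux_pullout_zero hm' μ (he1W_sm.mul hk_sm) hint3 (hc1.sub hμ₁W_int) hcz2
  -- decomposition of the AIPW term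
  have hdecomp : ∀ ω, T ω * (T ω * c1 ω + (1 - T ω) * c0 ω - μ₁ (W ω)) / etil (W ω)
      = c1 ω * h ω + (μ₁ (W ω) * k ω) * (e1 (W ω) - T ω)
        + (e1 (W ω) * k ω) * (c1 ω - μ₁ (W ω)) := by
    intro ω
    simp only [hhdef, hkdef, div_eq_mul_inv]
    rcases hT01 ω with h0 | h0 <;> rw [h0] <;> ring
  -- final assembly
  have hA : ∫ ω, T ω * (T ω * c1 ω + (1 - T ω) * c0 ω - μ₁ (W ω)) / etil (W ω) ∂μ = 0 := by
    rw [show (fun ω => T ω * (T ω * c1 ω + (1 - T ω) * c0 ω - μ₁ (W ω)) / etil (W ω))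
      = fun ω => c1 ω * h ω + (μ₁ (W ω) * k ω) * (e1 (W ω) - T ω)
        + (e1 (W ω) * k ω) * (c1 ω - μ₁ (W ω)) from funext hdecomp]
    have hadd1 : Integrable
        (fun ω => c1 ω * h ω + (μ₁ (W ω) * k ω) * (e1 (W ω) - T ω)) μ := hint1.add hint2
    rw [integral_add hadd1 hint3, integral_add hint1 hint2, ht1, ht2, ht3]
    norm_num
  have hμ₁c1 : ∫ ω, μ₁ (W ω) ∂μ = ∫ ω, c1 ω ∂μ := by
    rw [← integral_congr_ae hμ₁, integral_condExp hm']
  rw [integral_add hint hμ₁W_int, hA, hμ₁c1, zero_add]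
end

section
/- Let S ⊆ ℝ^m be a finite set, P = conv(S), θ* ∈ ℝ^p, and g : ℝ^p → ℝ^m continuously differentiable with bounded derivative. Let δ : Ω → ℝ^p be a bounded measurable random vector on a probability space. Let I ⊆ ℝ be an open interval and suppose that for every ε ∈ I and almost every ω, the linear objective x ↦ ⟨x, g(θ* + ε δ(ω))⟩ has a unique minimizer x(θ* + ε δ(ω)) over P (which is then an almost-everywhere-defined measurable selection). Then the expected value function φ(ε) = E[ min_{x∈P} ⟨x, g(θ* + εδ)⟩ ] is differentiable at every ε ∈ I, with φ'(ε) = E[ ⟨ x(θ* + εδ), Dg(θ* + εδ) δ ⟩ ]. -/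
open MeasureTheory RealInnerProductSpace

private lemma measurable_finset_inf'_aux {ι Ω : Type*} [MeasurableSpace Ω] {T : Finset ι}
    (hT : T.Nonempty) (f : ι → Ω → ℝ) (hf : ∀ i ∈ T, Measurable (f i)) :
    Measurable fun ω => T.inf' hT (fun i => f i ω) := by
  induction hT using Finset.Nonempty.cons_induction with
  | singleton a => simpa using hf a (by simp)
  | cons a s h hs ih =>
    have heq : ∀ ω : Ω, (Finset.cons a s h).inf' (Finset.cons_nonempty h) (fun i => f i ω)
        = min (f a ω) (s.inf' hs (fun i => f i ω)) :=
      fun ω => Finset.inf'_cons hs (fun i => f i ω)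
    simp only [heq]
    exact (hf a (by simp)).min (ih fun i hi => hf i (by simp [hi]))

private lemma lipschitzWith_finset_inf'_aux {ι α : Type*} [PseudoEMetricSpace α] {T : Finset ι}
    (hT : T.Nonempty) (K : NNReal) (f : ι → α → ℝ) (hf : ∀ i ∈ T, LipschitzWith K (f i)) :
    LipschitzWith K fun x => T.inf' hT (fun i => f i x) := by
  induction hT using Finset.Nonempty.cons_induction with
  | singleton a => simpa using hf a (by simp)
  | cons a s h hs ih =>
    have heq : ∀ x : α, (Finset.cons a s h).inf' (Finset.cons_nonempty h) (fun i => f i x)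
        = min (f a x) (s.inf' hs (fun i => f i x)) :=
      fun x => Finset.inf'_cons hs (fun i => f i x)
    simp only [heq]
    have := (hf a (by simp)).min (ih fun i hi => hf i (by simp [hi]))
    simpa using this

/-- **Envelope differentiation step of the perturbation method.**
Over the polytope `P = conv S` (`S` finite), with `g` continuously differentiable with
bounded derivative and `δ` a bounded random vector, if for every `ε` in the open interval
`(a, b)` the linear objective `y ↦ ⟨y, g(θ* + ε δ(ω))⟩` has a.s. a unique minimizer
`x(θ* + ε δ(ω))` over `P`, then `φ(ε) = E[min_{y ∈ P} ⟨y, g(θ* + εδ)⟩]` is differentiable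
at every `ε ∈ (a, b)` with `φ'(ε) = E[⟨x(θ* + εδ), Dg(θ* + εδ) δ⟩]`. -/
theorem perturbation_envelope_derivative
    {m p : ℕ} {Ω : Type*} [MeasurableSpace Ω] (μ : Measure Ω) [IsProbabilityMeasure μ]
    (S : Set (EuclideanSpace ℝ (Fin m))) (hS : S.Finite)
    (θ : EuclideanSpace ℝ (Fin p))
    (g : EuclideanSpace ℝ (Fin p) → EuclideanSpace ℝ (Fin m))
    (hg : ContDiff ℝ 1 g) (M : ℝ) (hgM : ∀ ϑ, ‖fderiv ℝ g ϑ‖ ≤ M)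
    (δ : Ω → EuclideanSpace ℝ (Fin p)) (hδm : Measurable δ)
    (Mδ : ℝ) (hδb : ∀ ω, ‖δ ω‖ ≤ Mδ)
    (a b : ℝ)
    (x : EuclideanSpace ℝ (Fin p) → EuclideanSpace ℝ (Fin m)) (hxm : Measurable x)
    (hx : ∀ ε ∈ Set.Ioo a b, ∀ᵐ ω ∂μ,
      x (θ + ε • δ ω) ∈ convexHull ℝ S ∧
        (∀ y ∈ convexHull ℝ S,
          ⟪x (θ + ε • δ ω), g (θ + ε • δ ω)⟫ ≤ ⟪y, g (θ + ε • δ ω)⟫) ∧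
        ∀ y ∈ convexHull ℝ S,
          (∀ z ∈ convexHull ℝ S, ⟪y, g (θ + ε • δ ω)⟫ ≤ ⟪z, g (θ + ε • δ ω)⟫) →
            y = x (θ + ε • δ ω)) :
    ∀ ε ∈ Set.Ioo a b,
      HasDerivAt
        (fun e : ℝ =>
          ∫ ω, sInf ((fun y => ⟪y, g (θ + e • δ ω)⟫) '' convexHull ℝ S) ∂μ)
        (∫ ω, ⟪x (θ + ε • δ ω), fderiv ℝ g (θ + ε • δ ω) (δ ω)⟫ ∂μ) ε := by
  intro ε hε
  -- S is nonempty
  have hSne : S.Nonempty := by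
    by_contra hne
    rw [Set.not_nonempty_iff_eq_empty] at hne
    subst hne
    have h1 := (hx ε hε).exists
    obtain ⟨ω, hω, -, -⟩ := h1
    simp [convexHull_empty] at hω
  set T : Finset (EuclideanSpace ℝ (Fin m)) := hS.toFinset with hTdef
  have hT : T.Nonempty := by rwa [hTdef, Set.Finite.toFinset_nonempty]
  have hmemT : ∀ s, s ∈ T ↔ s ∈ S := fun s => hS.mem_toFinset
  -- lower bound of the linear objective on the convex hull
  have hlb : ∀ c : EuclideanSpace ℝ (Fin m), ∀ y ∈ convexHull ℝ S,
      T.inf' hT (fun s => ⟪s, c⟫) ≤ ⟪y, c⟫ := by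
    intro c y hy
    have hconv : Convex ℝ {z : EuclideanSpace ℝ (Fin m) |
        T.inf' hT (fun s => ⟪s, c⟫) ≤ ⟪z, c⟫} :=
      convex_halfSpace_ge
        ⟨fun a b => inner_add_left a b c, fun r a => real_inner_smul_left a c r⟩ _
    refine convexHull_min (fun s hs => ?_) hconv hy
    simp only [Set.mem_setOf_eq]
    exact Finset.inf'_le _ ((hmemT s).2 hs)
  -- the sInf over the hull equals the finite min over vertices
  have keyA : ∀ c : EuclideanSpace ℝ (Fin m),
      sInf ((fun y => ⟪y, c⟫) '' convexHull ℝ S) = T.inf' hT (fun s => ⟪s, c⟫) := by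
    intro c
    obtain ⟨s₀, hs₀T, hs₀⟩ := T.exists_mem_eq_inf' hT (fun s => ⟪s, c⟫)
    have hs₀hull : s₀ ∈ convexHull ℝ S := subset_convexHull ℝ S ((hmemT s₀).1 hs₀T)
    have hbdd : ∀ z ∈ (fun y => ⟪y, c⟫) '' convexHull ℝ S,
        T.inf' hT (fun s => ⟪s, c⟫) ≤ z := by
      rintro z ⟨y, hy, rfl⟩
      exact hlb c y hy
    apply le_antisymm
    · exact csInf_le ⟨_, hbdd⟩ ⟨s₀, hs₀hull, hs₀.symm⟩
    · exact le_csInf ⟨_, ⟨s₀, hs₀hull, rfl⟩⟩ hbdd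
  -- constants
  set Mδ' : ℝ := |Mδ| with hMδ'
  set M' : ℝ := |M| with hM'
  have hMtop : (M.toNNReal : ℝ) ≤ M' := by
    rw [Real.coe_toNNReal']
    exact max_le (le_abs_self M) (abs_nonneg M)
  have hδb' : ∀ ω, ‖δ ω‖ ≤ Mδ' := fun ω => (hδb ω).trans (le_abs_self Mδ)
  set N : ℝ := T.sup' hT (fun s => ‖s‖) with hN
  have hsN : ∀ s ∈ T, ‖s‖ ≤ N := fun s hs => Finset.le_sup' _ hs
  have hN0 : 0 ≤ N := by
    obtain ⟨s₀, hs₀⟩ := hT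
    exact (norm_nonneg s₀).trans (hsN s₀ hs₀)
  -- g is Lipschitz
  have hgdiff : Differentiable ℝ g := hg.differentiable one_ne_zero
  have hgLip : LipschitzWith M.toNNReal g := by
    apply lipschitzWith_of_nnnorm_fderiv_le hgdiff
    intro ϑ
    rw [← NNReal.coe_le_coe, coe_nnnorm, Real.coe_toNNReal']
    exact le_max_of_le_left (hgM ϑ)
  -- the Lipschitz constant
  set K : ℝ := N * (M' * Mδ') with hK
  have hK0 : 0 ≤ K :=
    mul_nonneg hN0 (mul_nonneg (abs_nonneg M) (abs_nonneg Mδ))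
  -- local notation
  set F : ℝ → Ω → ℝ := fun e ω => T.inf' hT (fun s => ⟪s, g (θ + e • δ ω)⟫) with hF
  -- each vertex objective is Lipschitz in e, with a uniform constant
  have hlip_each : ∀ ω, ∀ s ∈ T,
      LipschitzWith (Real.nnabs K) (fun e : ℝ => ⟪s, g (θ + e • δ ω)⟫) := by
    intro ω s hs
    have laff : LipschitzWith ‖δ ω‖₊ (fun e : ℝ => θ + e • δ ω) := by
      apply LipschitzWith.of_dist_le_mul
      intro e e'
      have : (θ + e • δ ω) - (θ + e' • δ ω) = (e - e') • δ ω := by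
        rw [add_sub_add_left_eq_sub, ← sub_smul]
      rw [dist_eq_norm, this, norm_smul, Real.dist_eq, coe_nnnorm]
      rw [Real.norm_eq_abs, mul_comm]
    have l3 : LipschitzWith ‖innerSL ℝ s‖₊ (fun y : EuclideanSpace ℝ (Fin m) => ⟪s, y⟫) :=
      (innerSL ℝ s).lipschitz
    have comp := l3.comp (hgLip.comp laff)
    apply comp.weaken
    rw [← NNReal.coe_le_coe]
    push_cast
    rw [innerSL_apply_norm, abs_of_nonneg hK0]
    have h1 : ‖s‖ ≤ N := hsN s hs
    have h2 : (M.toNNReal : ℝ) ≤ M' := hMtop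
    have h3 : ‖δ ω‖ ≤ Mδ' := hδb' ω
    have h4 : (0:ℝ) ≤ M.toNNReal := (M.toNNReal).coe_nonneg
    have h5 : (0:ℝ) ≤ ‖δ ω‖ := norm_nonneg _
    have h6 : (0:ℝ) ≤ ‖s‖ := norm_nonneg _
    have h7 : (0:ℝ) ≤ M' := abs_nonneg M
    have h8 : (0:ℝ) ≤ Mδ' := abs_nonneg Mδ
    calc ‖s‖ * ((M.toNNReal : ℝ) * ‖δ ω‖)
        ≤ N * (M' * Mδ') :=
          mul_le_mul h1 (mul_le_mul h2 h3 h5 h7) (mul_nonneg h4 h5) hN0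
      _ = K := hK.symm
  -- measurability in ω
  have hϑm : ∀ e : ℝ, Measurable fun ω => θ + e • δ ω :=
    fun e => measurable_const.add (hδm.const_smul e)
  have hFmeas : ∀ e : ℝ, Measurable (F e) := by
    intro e
    apply measurable_finset_inf'_aux hT
    intro s _
    exact Measurable.inner measurable_const (hg.continuous.measurable.comp (hϑm e))
  -- bound on the objective values at ε
  have hgbound : ∀ ω, ‖g (θ + ε • δ ω)‖ ≤ ‖g θ‖ + M' * (|ε| * Mδ') := by
    intro ω
    have h1 := hgLip.dist_le_mul (θ + ε • δ ω) θ
    have h2 : dist (θ + ε • δ ω) θ = |ε| * ‖δ ω‖ := by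
      rw [dist_eq_norm, add_sub_cancel_left, norm_smul, Real.norm_eq_abs]
    have h3 : ‖g (θ + ε • δ ω)‖ - ‖g θ‖ ≤ dist (g (θ + ε • δ ω)) (g θ) := by
      rw [dist_eq_norm]; exact norm_sub_norm_le _ _
    have h4 : (M.toNNReal : ℝ) * dist (θ + ε • δ ω) θ ≤ M' * (|ε| * Mδ') := by
      rw [h2]
      have := hδb' ω
      have h5 : |ε| * ‖δ ω‖ ≤ |ε| * Mδ' := by
        apply mul_le_mul_of_nonneg_left this (abs_nonneg ε)
      have h6 : (0:ℝ) ≤ |ε| * ‖δ ω‖ := mul_nonneg (abs_nonneg ε) (norm_nonneg _)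
      nlinarith [hMtop, (M.toNNReal).coe_nonneg, abs_nonneg M]
    linarith
  have hFbound : ∀ ω, |F ε ω| ≤ N * (‖g θ‖ + M' * (|ε| * Mδ')) := by
    intro ω
    obtain ⟨s₀, hs₀T, hs₀⟩ := T.exists_mem_eq_inf' hT (fun s => ⟪s, g (θ + ε • δ ω)⟫)
    rw [hF]
    simp only []
    rw [hs₀]
    have h1 : |⟪s₀, g (θ + ε • δ ω)⟫| ≤ ‖s₀‖ * ‖g (θ + ε • δ ω)‖ :=
      abs_real_inner_le_norm _ _
    have h2 := hsN s₀ hs₀T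
    have h3 := hgbound ω
    have h4 : (0:ℝ) ≤ ‖g (θ + ε • δ ω)‖ := norm_nonneg _
    have h5 : (0:ℝ) ≤ ‖s₀‖ := norm_nonneg _
    nlinarith
  have hFint : Integrable (F ε) μ := by
    apply Integrable.mono' (integrable_const (N * (‖g θ‖ + M' * (|ε| * Mδ'))))
      (hFmeas ε).aestronglyMeasurable
    filter_upwards with ω
    rw [Real.norm_eq_abs]
    exact hFbound ω
  -- measurability of the derivative integrand
  have hF'meas : AEStronglyMeasurable
      (fun ω => ⟪x (θ + ε • δ ω), fderiv ℝ g (θ + ε • δ ω) (δ ω)⟫ : Ω → ℝ) μ := by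
    have hx0m : Measurable fun ω => x (θ + ε • δ ω) := hxm.comp (hϑm ε)
    have hcontfd : Continuous fun q : EuclideanSpace ℝ (Fin p) × EuclideanSpace ℝ (Fin p) =>
        fderiv ℝ g q.1 q.2 :=
      isBoundedBilinearMap_apply.continuous.comp
        (((hg.continuous_fderiv one_ne_zero).comp continuous_fst).prodMk continuous_snd)
    have hfd : Measurable fun ω => fderiv ℝ g (θ + ε • δ ω) (δ ω) :=
      hcontfd.measurable.comp ((hϑm ε).prodMk hδm)
    exact (hx0m.inner hfd).aestronglyMeasurable
  -- a.e. differentiability at ε via the envelope/uniqueness argument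
  have hdiff : ∀ᵐ ω ∂μ, HasDerivAt (fun e => F e ω)
      (⟪x (θ + ε • δ ω), fderiv ℝ g (θ + ε • δ ω) (δ ω)⟫) ε := by
    filter_upwards [hx ε hε] with ω hω
    obtain ⟨hmem, hmin, huniq⟩ := hω
    set ϑ := θ + ε • δ ω with hϑ
    set x₀ := x ϑ with hx₀
    set c := g ϑ with hc
    -- x₀ is a vertex
    have hx₀T : x₀ ∈ T := by
      obtain ⟨s₀, hs₀T, hs₀⟩ := T.exists_mem_eq_inf' hT (fun s => ⟪s, c⟫)
      have hs₀hull : s₀ ∈ convexHull ℝ S := subset_convexHull ℝ S ((hmemT s₀).1 hs₀T)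
      have h1 : ⟪s₀, c⟫ ≤ ⟪x₀, c⟫ := hs₀ ▸ hlb c x₀ hmem
      have h2 : ⟪x₀, c⟫ ≤ ⟪s₀, c⟫ := hmin s₀ hs₀hull
      have h12 : ⟪s₀, c⟫ ≤ ⟪x₀, c⟫ := h1
      have h3 : ∀ z ∈ convexHull ℝ S, ⟪s₀, c⟫ ≤ ⟪z, c⟫ :=
        fun z hz => le_trans h12 (hmin z hz)
      have := huniq s₀ hs₀hull h3
      rwa [← this]
    -- strict minimality at the other vertices
    have hstrict : ∀ s ∈ T, s ≠ x₀ → ⟪x₀, c⟫ < ⟪s, c⟫ := by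
      intro s hsT hne
      have hshull : s ∈ convexHull ℝ S := subset_convexHull ℝ S ((hmemT s).1 hsT)
      refine lt_of_le_of_ne (hmin s hshull) fun heq => hne ?_
      apply huniq s hshull
      intro z hz
      rw [← heq]
      exact hmin z hz
    -- continuity of vertex objectives in e
    have hconte : ∀ s : EuclideanSpace ℝ (Fin m),
        Continuous fun e : ℝ => ⟪s, g (θ + e • δ ω)⟫ := by
      intro s
      exact Continuous.inner continuous_const
        (hg.continuous.comp (continuous_const.add (continuous_id.smul continuous_const)))
    -- eventually F e ω = ⟪x₀, g (θ + e • δ ω)⟫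
    have hevEq : (fun e => ⟪x₀, g (θ + e • δ ω)⟫) =ᶠ[nhds ε] fun e => F e ω := by
      have hev : ∀ᶠ e in nhds ε, ∀ s ∈ T, s ≠ x₀ →
          ⟪x₀, g (θ + e • δ ω)⟫ < ⟪s, g (θ + e • δ ω)⟫ := by
        rw [Filter.eventually_all_finset]
        intro s hsT
        by_cases hne : s = x₀
        · simp [hne]
        · have hlt := hstrict s hsT hne
          have := ((hconte x₀).continuousAt (x := ε)).eventually_lt
            ((hconte s).continuousAt (x := ε)) hlt
          filter_upwards [this] with e he _
          exact he
      filter_upwards [hev] with e he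
      apply le_antisymm
      · exact Finset.le_inf' hT _ fun s hsT => by
          by_cases hne : s = x₀
          · rw [hne]
          · exact (he s hsT hne).le
      · exact Finset.inf'_le _ hx₀T
    -- derivative of the active objective
    have d1 : HasDerivAt (fun e : ℝ => θ + e • δ ω) (δ ω) ε := by
      have := ((hasDerivAt_id ε).smul_const (δ ω)).const_add θ
      simpa using this
    have d2 : HasDerivAt (fun e : ℝ => g (θ + e • δ ω)) (fderiv ℝ g ϑ (δ ω)) ε :=
      (hgdiff ϑ).hasFDerivAt.comp_hasDerivAt ε d1
    have d3 : HasDerivAt (fun e : ℝ => ⟪x₀, g (θ + e • δ ω)⟫)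
        ⟪x₀, fderiv ℝ g ϑ (δ ω)⟫ ε := by
      have := (innerSL ℝ x₀).hasFDerivAt.comp_hasDerivAt ε d2
      simpa [Function.comp_def] using this
    exact d3.congr_of_eventuallyEq hevEq.symm
  -- Lipschitz condition
  have hlipF : ∀ᵐ ω ∂μ, LipschitzOnWith (Real.nnabs K) (fun e => F e ω) (Metric.ball ε 1) := by
    filter_upwards with ω
    exact (lipschitzWith_finset_inf'_aux hT (Real.nnabs K)
      (fun s e => ⟪s, g (θ + e • δ ω)⟫) (hlip_each ω)).lipschitzOnWith (s := Metric.ball ε 1)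
  -- apply the dominated differentiation theorem
  have main := hasDerivAt_integral_of_dominated_loc_of_lip (F := F)
    (F' := fun ω => ⟪x (θ + ε • δ ω), fderiv ℝ g (θ + ε • δ ω) (δ ω)⟫)
    (bound := fun _ => K) (Metric.ball_mem_nhds ε one_pos)
    (Filter.Eventually.of_forall fun e => (hFmeas e).aestronglyMeasurable)
    hFint hF'meas hlipF (integrable_const K) hdiff
  have hfinal := main.2
  have hrw : (fun e : ℝ =>
      ∫ ω, sInf ((fun y => ⟪y, g (θ + e • δ ω)⟫) '' convexHull ℝ S) ∂μ)
      = fun e : ℝ => ∫ ω, F e ω ∂μ := by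
    funext e
    congr 1
    funext ω
    exact keyA _
  rw [hrw]
  exact hfinal
end

section
/- Let S ⊆ ℝ^m be a finite set, P = conv(S), θ* ∈ ℝ^p, and g : ℝ^p → ℝ^m twice continuously differentiable with bounded first and second derivatives. Let δ : Ω → ℝ^p be a bounded measurable random vector and let I be an open interval containing 0 such that for every ε ∈ I and almost every ω the linear objective x ↦ ⟨x, g(θ* + εδ(ω))⟩ has a unique minimizer x(θ* + εδ(ω)) over P. Define η(ε) = E[ ⟨ x(θ* + εδ), g(θ*) ⟩ ] and φ(ε) = E[ ⟨ x(θ* + εδ), g(θ* + εδ) ⟩ ]. Then φ is differentiable on I and η(ε) = φ(ε) − ε·φ'(ε) + O(ε²) as ε → 0; i.e., there exist C > 0 and ε₀ > 0 with [−ε₀, ε₀] ⊆ I such that |η(ε) − φ(ε) + ε φ'(ε)| ≤ C ε² for all |ε| ≤ ε₀. (Proposition 1 of the paper, the perturbation-method identity for nonlinear prediction models.) -/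
open MeasureTheory RealInnerProductSpace

section Aux

private lemma pm_inner_linear {m : ℕ} (c : EuclideanSpace ℝ (Fin m)) :
    IsLinearMap ℝ (fun z : EuclideanSpace ℝ (Fin m) => ⟪z, c⟫) :=
  ⟨fun u v => inner_add_left u v c, fun r u => by
    simpa using real_inner_smul_left u c r⟩

/-- A linear functional on a convex hull of a finite set is bounded below by its value
at some point of the set. -/
private lemma pm_hull_min {m : ℕ} {S : Set (EuclideanSpace ℝ (Fin m))} (hS : S.Finite)
    (hne : S.Nonempty) (c : EuclideanSpace ℝ (Fin m)) {y : EuclideanSpace ℝ (Fin m)}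
    (hy : y ∈ convexHull ℝ S) : ∃ s ∈ S, ⟪s, c⟫ ≤ ⟪y, c⟫ := by
  classical
  set t := hS.toFinset with ht
  have htne : t.Nonempty := by
    simpa [ht, Set.Finite.toFinset_nonempty] using hne
  set m0 := t.inf' htne (fun s => ⟪s, c⟫) with hm0
  have hsub : convexHull ℝ S ⊆ {z | m0 ≤ ⟪z, c⟫} := by
    apply convexHull_min
    · intro s hs
      exact Finset.inf'_le (fun z => ⟪z, c⟫) (hS.mem_toFinset.2 hs)
    · exact convex_halfSpace_ge (pm_inner_linear c) m0
  obtain ⟨s, hst, hseq⟩ := Finset.exists_mem_eq_inf' htne (fun s => ⟪s, c⟫)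
  exact ⟨s, by simpa [ht] using hst, by rw [← hseq]; exact hsub hy⟩

/-- If all values are within `C`, two `inf'`s are within `C`. -/
private lemma pm_inf'_dist {ι : Type*} {t : Finset ι} (ht : t.Nonempty) (f g : ι → ℝ)
    {C : ℝ} (h : ∀ i ∈ t, |f i - g i| ≤ C) :
    |t.inf' ht f - t.inf' ht g| ≤ C := by
  rw [abs_sub_le_iff]
  constructor
  · obtain ⟨j, hj, hje⟩ := Finset.exists_mem_eq_inf' ht g
    have h1 : t.inf' ht f ≤ f j := Finset.inf'_le _ hj
    have h2 := h j hj
    rw [abs_sub_le_iff] at h2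
    rw [hje]
    linarith [h2.1]
  · obtain ⟨j, hj, hje⟩ := Finset.exists_mem_eq_inf' ht f
    have h1 : t.inf' ht g ≤ g j := Finset.inf'_le _ hj
    have h2 := h j hj
    rw [abs_sub_le_iff] at h2
    rw [hje]
    linarith [h2.2]

private lemma pm_abs_inf'_le {ι : Type*} {t : Finset ι} (ht : t.Nonempty) (f : ι → ℝ)
    {C : ℝ} (h : ∀ i ∈ t, |f i| ≤ C) : |t.inf' ht f| ≤ C := by
  have := pm_inf'_dist ht f (fun _ => 0) (by simpa using h)
  simpa [Finset.inf'_const] using this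

/-- Danskin-type lemma: derivative of a finite min at a point with unique minimizer. -/
private lemma pm_danskin {m : ℕ} (t : Finset (EuclideanSpace ℝ (Fin m))) (ht : t.Nonempty)
    (φ : ℝ → EuclideanSpace ℝ (Fin m)) (φ' : EuclideanSpace ℝ (Fin m)) (e : ℝ)
    (hφ : Continuous φ) (hd : HasDerivAt φ φ' e)
    (x0 : EuclideanSpace ℝ (Fin m)) (hx0 : x0 ∈ t)
    (hmin : ∀ s ∈ t, ⟪x0, φ e⟫ ≤ ⟪s, φ e⟫)
    (huniq : ∀ s ∈ t, ⟪s, φ e⟫ = ⟪x0, φ e⟫ → s = x0) :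
    HasDerivAt (fun e' => t.inf' ht (fun s => ⟪s, φ e'⟫)) ⟪x0, φ'⟫ e := by
  have key : (fun e' => t.inf' ht (fun s => ⟪s, φ e'⟫)) =ᶠ[nhds e]
      (fun e' => ⟪x0, φ e'⟫) := by
    have hev : ∀ s ∈ t, ∀ᶠ e' in nhds e, ⟪x0, φ e'⟫ ≤ ⟪s, φ e'⟫ := by
      intro s hs
      rcases eq_or_ne s x0 with rfl | hne
      · exact Filter.Eventually.of_forall fun _ => le_rfl
      · have hlt : ⟪x0, φ e⟫ < ⟪s, φ e⟫ :=
          lt_of_le_of_ne (hmin s hs) (fun h => hne (huniq s hs h.symm))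
        have hc1 : ContinuousAt (fun e' => ⟪x0, φ e'⟫) e :=
          ((continuous_const.inner hφ)).continuousAt
        have hc2 : ContinuousAt (fun e' => ⟪s, φ e'⟫) e :=
          ((continuous_const.inner hφ)).continuousAt
        exact (hc1.eventually_lt hc2 hlt).mono fun _ h => le_of_lt h
    have := (Filter.eventually_all_finset t (l := nhds e)
      (p := fun s e' => ⟪x0, φ e'⟫ ≤ ⟪s, φ e'⟫)).2 hev
    filter_upwards [this] with e' he'
    exact le_antisymm (Finset.inf'_le _ hx0) (Finset.le_inf' ht _ fun s hs => he' s hs)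
  have hder : HasDerivAt (fun e' => ⟪x0, φ e'⟫) ⟪x0, φ'⟫ e := by
    simpa using (hasDerivAt_const e x0).inner ℝ hd
  exact hder.congr_of_eventuallyEq key

private lemma pm_measurable_inf' {Ω ι : Type*} [MeasurableSpace Ω] {t : Finset ι}
    (ht : t.Nonempty) {f : ι → Ω → ℝ} (hf : ∀ i, Measurable (f i)) :
    Measurable (fun ω => t.inf' ht (fun i => f i ω)) := by
  classical
  induction ht using Finset.Nonempty.cons_induction with
  | singleton a => simp only [Finset.inf'_singleton]; exact hf a
  | cons a s h hs ih =>
    have heq : (fun ω => (Finset.cons a s h).inf' (Finset.cons_nonempty h) (fun i => f i ω))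
        = fun ω => (f a ω) ⊓ s.inf' hs (fun i => f i ω) := by
      funext ω; exact Finset.inf'_cons hs (fun i => f i ω)
    rw [heq]
    exact (hf a).inf ih

end Aux

set_option maxHeartbeats 1000000

/-- **Proposition 1: the perturbation-method identity for nonlinear prediction models.**
Over the polytope `P = conv S` (`S` finite), with `g` twice continuously differentiable
with bounded first and second derivatives, `δ` a bounded random vector, and a.s.-unique
minimizers `x(θ* + εδ(ω))` of `y ↦ ⟨y, g(θ* + εδ(ω))⟩` over `P` for `ε` in an open
interval `I ∋ 0`, the functions `η(ε) = E[⟨x(θ* + εδ), g(θ*)⟩]` and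
`φ(ε) = E[⟨x(θ* + εδ), g(θ* + εδ)⟩]` satisfy: `φ` is differentiable on `I` and
`η(ε) = φ(ε) − ε φ'(ε) + O(ε²)`. -/
theorem perturbation_method_identity
    {m p : ℕ} {Ω : Type*} [MeasurableSpace Ω] (μ : Measure Ω) [IsProbabilityMeasure μ]
    (S : Set (EuclideanSpace ℝ (Fin m))) (hS : S.Finite)
    (θ : EuclideanSpace ℝ (Fin p))
    (g : EuclideanSpace ℝ (Fin p) → EuclideanSpace ℝ (Fin m))
    (hg : ContDiff ℝ 2 g) (M : ℝ)
    (hgM : ∀ ϑ, ‖fderiv ℝ g ϑ‖ ≤ M ∧ ‖fderiv ℝ (fderiv ℝ g) ϑ‖ ≤ M)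
    (δ : Ω → EuclideanSpace ℝ (Fin p)) (hδm : Measurable δ)
    (Mδ : ℝ) (hδb : ∀ ω, ‖δ ω‖ ≤ Mδ)
    (a b : ℝ) (h0 : (0 : ℝ) ∈ Set.Ioo a b)
    (x : EuclideanSpace ℝ (Fin p) → EuclideanSpace ℝ (Fin m)) (hxm : Measurable x)
    (hx : ∀ ε ∈ Set.Ioo a b, ∀ᵐ ω ∂μ,
      x (θ + ε • δ ω) ∈ convexHull ℝ S ∧
        (∀ y ∈ convexHull ℝ S,
          ⟪x (θ + ε • δ ω), g (θ + ε • δ ω)⟫ ≤ ⟪y, g (θ + ε • δ ω)⟫) ∧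
        ∀ y ∈ convexHull ℝ S,
          (∀ z ∈ convexHull ℝ S, ⟪y, g (θ + ε • δ ω)⟫ ≤ ⟪z, g (θ + ε • δ ω)⟫) →
            y = x (θ + ε • δ ω)) :
    (∀ ε ∈ Set.Ioo a b,
      DifferentiableAt ℝ
        (fun e : ℝ => ∫ ω, ⟪x (θ + e • δ ω), g (θ + e • δ ω)⟫ ∂μ) ε) ∧
      ∃ C > (0 : ℝ), ∃ ε₀ > (0 : ℝ), Set.Icc (-ε₀) ε₀ ⊆ Set.Ioo a b ∧
        ∀ ε : ℝ, |ε| ≤ ε₀ →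
          |(∫ ω, ⟪x (θ + ε • δ ω), g θ⟫ ∂μ)
              - (∫ ω, ⟪x (θ + ε • δ ω), g (θ + ε • δ ω)⟫ ∂μ)
              + ε * deriv (fun e : ℝ => ∫ ω, ⟪x (θ + e • δ ω), g (θ + e • δ ω)⟫ ∂μ) ε|
            ≤ C * ε ^ 2 := by
  classical
  -- nonemptiness
  obtain ⟨ω0, hω0⟩ := (hx 0 h0).exists
  have hKne : (convexHull ℝ S).Nonempty := ⟨_, hω0.1⟩
  have hne : S.Nonempty := by rwa [convexHull_nonempty_iff] at hKne
  set t := hS.toFinset with htdef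
  have htne : t.Nonempty := by
    rw [htdef, Set.Finite.toFinset_nonempty]; exact hne
  -- bounds
  obtain ⟨R, hR⟩ := isBounded_iff_forall_norm_le.1 (hS.isCompact_convexHull (𝕜 := ℝ)).isBounded
  set R0 : ℝ := max R 1 with hR0def
  have hR0 : ∀ y ∈ convexHull ℝ S, ‖y‖ ≤ R0 := fun y hy => (hR y hy).trans (le_max_left _ _)
  have hR0pos : (0:ℝ) < R0 := lt_of_lt_of_le one_pos (le_max_right _ _)
  have hM0 : (0:ℝ) ≤ M := le_trans (norm_nonneg _) (hgM 0).1
  have hMδ0 : (0:ℝ) ≤ Mδ := le_trans (norm_nonneg _) (hδb ω0)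
  have hgdiff : Differentiable ℝ g := hg.differentiable (by norm_num)
  have hfd : ContDiff ℝ 1 (fderiv ℝ g) := hg.fderiv_right (by norm_num)
  have hfc : Continuous (fderiv ℝ g) := hfd.continuous
  -- Lipschitz estimates from the derivative bounds
  have hglip : ∀ u v : EuclideanSpace ℝ (Fin p), ‖g u - g v‖ ≤ M * ‖u - v‖ := by
    intro u v
    exact convex_univ.norm_image_sub_le_of_norm_fderiv_le
      (fun w _ => hgdiff w) (fun w _ => (hgM w).1)
      (Set.mem_univ v) (Set.mem_univ u)
  have hDglip : ∀ u v : EuclideanSpace ℝ (Fin p),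
      ‖fderiv ℝ g u - fderiv ℝ g v‖ ≤ M * ‖u - v‖ := by
    intro u v
    exact convex_univ.norm_image_sub_le_of_norm_fderiv_le
      (fun w _ => hfd.differentiable one_ne_zero w) (fun w _ => (hgM w).2)
      (Set.mem_univ v) (Set.mem_univ u)
  -- the min function and the candidate derivative
  set F : ℝ → Ω → ℝ := fun e ω => t.inf' htne (fun s => ⟪s, g (θ + e • δ ω)⟫) with hFdef
  set D : ℝ → Ω → ℝ :=
    fun e ω => ⟪x (θ + e • δ ω), (fderiv ℝ g (θ + e • δ ω)) (δ ω)⟫ with hDdef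
  set L : ℝ := R0 * (M * Mδ) with hLdef
  -- derivative of a single branch
  have hline : ∀ (v : EuclideanSpace ℝ (Fin p)) (e : ℝ),
      HasDerivAt (fun e' : ℝ => θ + e' • v) v e := by
    intro v e
    simpa using ((hasDerivAt_id e).smul_const v).const_add θ
  have hbranchg : ∀ (v : EuclideanSpace ℝ (Fin p)) (e : ℝ),
      HasDerivAt (fun e' => g (θ + e' • v)) ((fderiv ℝ g (θ + e • v)) v) e := by
    intro v e
    exact (hgdiff (θ + e • v)).hasFDerivAt.comp_hasDerivAt e (hline v e)
  -- measurability facts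
  have haff : ∀ e : ℝ, Measurable fun ω => θ + e • δ ω := by
    intro e
    exact measurable_const.add (hδm.const_smul e)
  have hFmeas : ∀ e : ℝ, Measurable (F e) := by
    intro e
    refine pm_measurable_inf' htne (fun s => ?_)
    exact Measurable.inner (measurable_const) ((hg.continuous.measurable).comp (haff e))
  have hDmeas : ∀ e : ℝ, Measurable (D e) := by
    intro e
    refine Measurable.inner (hxm.comp (haff e)) ?_
    have hc : Continuous fun v : EuclideanSpace ℝ (Fin p) => (fderiv ℝ g (θ + e • v)) v :=
      (hfc.comp (continuous_const.add (continuous_id.const_smul e))).clm_apply continuous_id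
    exact (hc.measurable).comp hδm
  -- a.e. value identity : the integrand equals the min
  have hFval : ∀ (e : ℝ) (ω : Ω), x (θ + e • δ ω) ∈ convexHull ℝ S →
      (∀ y ∈ convexHull ℝ S, ⟪x (θ + e • δ ω), g (θ + e • δ ω)⟫ ≤ ⟪y, g (θ + e • δ ω)⟫) →
      ⟪x (θ + e • δ ω), g (θ + e • δ ω)⟫ = F e ω := by
    intro e ω hmem hmin
    apply le_antisymm
    · exact Finset.le_inf' htne _ fun s hs =>
        hmin s (subset_convexHull ℝ S (hS.mem_toFinset.1 hs))
    · obtain ⟨s, hsS, hle⟩ := pm_hull_min hS hne (g (θ + e • δ ω)) hmem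
      exact le_trans (Finset.inf'_le _ (hS.mem_toFinset.2 hsS)) hle
  -- Lipschitz bound for F in the time variable
  have hFlip : ∀ ω (e1 e2 : ℝ), |F e1 ω - F e2 ω| ≤ L * |e1 - e2| := by
    intro ω e1 e2
    refine pm_inf'_dist htne _ _ (fun s hs => ?_)
    have hsn : ‖s‖ ≤ R0 := hR0 s (subset_convexHull ℝ S (hS.mem_toFinset.1 hs))
    have h1 : |⟪s, g (θ + e1 • δ ω)⟫ - ⟪s, g (θ + e2 • δ ω)⟫|
        ≤ ‖s‖ * ‖g (θ + e1 • δ ω) - g (θ + e2 • δ ω)‖ := by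
      rw [← inner_sub_right]
      exact abs_real_inner_le_norm _ _
    have h2 : ‖g (θ + e1 • δ ω) - g (θ + e2 • δ ω)‖ ≤ M * (|e1 - e2| * ‖δ ω‖) := by
      have := hglip (θ + e1 • δ ω) (θ + e2 • δ ω)
      have he : (θ + e1 • δ ω) - (θ + e2 • δ ω) = (e1 - e2) • δ ω := by
        rw [sub_smul]; abel
      rw [he, norm_smul, Real.norm_eq_abs] at this
      exact this
    have h3 : ‖δ ω‖ ≤ Mδ := hδb ω
    calc |⟪s, g (θ + e1 • δ ω)⟫ - ⟪s, g (θ + e2 • δ ω)⟫|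
        ≤ ‖s‖ * (M * (|e1 - e2| * ‖δ ω‖)) :=
          h1.trans (by apply mul_le_mul_of_nonneg_left h2 (norm_nonneg _))
      _ ≤ R0 * (M * (|e1 - e2| * Mδ)) := by
          have h4 : (0:ℝ) ≤ |e1 - e2| := abs_nonneg _
          have hx1 : |e1 - e2| * ‖δ ω‖ ≤ |e1 - e2| * Mδ := mul_le_mul_of_nonneg_left h3 h4
          have hx2 : M * (|e1 - e2| * ‖δ ω‖) ≤ M * (|e1 - e2| * Mδ) :=
            mul_le_mul_of_nonneg_left hx1 hM0
          exact mul_le_mul hsn hx2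
            (mul_nonneg hM0 (mul_nonneg h4 (norm_nonneg _))) (le_of_lt hR0pos)
      _ = L * |e1 - e2| := by rw [hLdef]; ring
  have hL0 : (0:ℝ) ≤ L :=
    mul_nonneg (le_of_lt hR0pos) (mul_nonneg hM0 hMδ0)
  have hgb : ∀ (e : ℝ) (ω : Ω), ‖g (θ + e • δ ω)‖ ≤ ‖g θ‖ + M * (|e| * Mδ) := by
    intro e ω
    have h3 := hglip (θ + e • δ ω) θ
    have he : (θ + e • δ ω) - θ = e • δ ω := by abel
    rw [he, norm_smul, Real.norm_eq_abs] at h3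
    have h4 : ‖g (θ + e • δ ω)‖ - ‖g θ‖ ≤ ‖g (θ + e • δ ω) - g θ‖ :=
      norm_sub_norm_le _ _
    have h5 : |e| * ‖δ ω‖ ≤ |e| * Mδ :=
      mul_le_mul_of_nonneg_left (hδb ω) (abs_nonneg _)
    nlinarith
  -- the key derivative statement
  have key : ∀ ε ∈ Set.Ioo a b, Integrable (D ε) μ ∧
      HasDerivAt (fun e : ℝ => ∫ ω, ⟪x (θ + e • δ ω), g (θ + e • δ ω)⟫ ∂μ)
        (∫ ω, D ε ω ∂μ) ε := by
    intro ε hε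
    have hF_int : Integrable (F ε) μ := by
      refine (integrable_const (R0 * (‖g θ‖ + M * (|ε| * Mδ)))).mono'
        (hFmeas ε).aestronglyMeasurable (Filter.Eventually.of_forall fun ω => ?_)
      rw [Real.norm_eq_abs]
      refine pm_abs_inf'_le htne _ (fun s hs => ?_)
      have hsn : ‖s‖ ≤ R0 := hR0 s (subset_convexHull ℝ S (hS.mem_toFinset.1 hs))
      have h1 : |⟪s, g (θ + ε • δ ω)⟫| ≤ ‖s‖ * ‖g (θ + ε • δ ω)‖ := abs_real_inner_le_norm _ _
      have h2 : ‖g (θ + ε • δ ω)‖ ≤ ‖g θ‖ + M * (|ε| * Mδ) := hgb ε ω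
      have hgn : (0:ℝ) ≤ ‖g (θ + ε • δ ω)‖ := norm_nonneg _
      nlinarith [norm_nonneg s, abs_nonneg (⟪s, g (θ + ε • δ ω)⟫ : ℝ)]
    have h_lip : ∀ᵐ ω ∂μ, LipschitzOnWith (Real.nnabs L) (fun e => F e ω) (Metric.ball ε 1) := by
      refine Filter.Eventually.of_forall fun ω => ?_
      have hlw : LipschitzWith (Real.nnabs L) (fun e => F e ω) := by
        refine LipschitzWith.of_dist_le_mul fun e1 e2 => ?_
        rw [Real.dist_eq, Real.dist_eq, Real.coe_nnabs, abs_of_nonneg hL0]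
        exact hFlip ω e1 e2
      exact hlw.lipschitzOnWith
    have h_diff : ∀ᵐ ω ∂μ, HasDerivAt (fun e => F e ω) (D ε ω) ε := by
      filter_upwards [hx ε hε] with ω hω
      obtain ⟨hmem, hminK, huniqK⟩ := hω
      have hSmin : ∀ s ∈ S, ⟪s, g (θ + ε • δ ω)⟫ = ⟪x (θ + ε • δ ω), g (θ + ε • δ ω)⟫ →
          s = x (θ + ε • δ ω) := by
        intro s hsS heq
        refine huniqK s (subset_convexHull ℝ S hsS) (fun z hz => ?_)
        rw [heq]; exact hminK z hz
      have hx0S : x (θ + ε • δ ω) ∈ S := by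
        obtain ⟨s, hsS, hle⟩ := pm_hull_min hS hne (g (θ + ε • δ ω)) hmem
        have heq : ⟪s, g (θ + ε • δ ω)⟫ = ⟪x (θ + ε • δ ω), g (θ + ε • δ ω)⟫ :=
          le_antisymm hle (hminK s (subset_convexHull ℝ S hsS))
        rw [← hSmin s hsS heq]; exact hsS
      have hφc : Continuous fun e' : ℝ => g (θ + e' • δ ω) :=
        hg.continuous.comp (continuous_const.add (continuous_id.smul continuous_const))
      exact pm_danskin t htne _ _ ε hφc (hbranchg (δ ω) ε) (x (θ + ε • δ ω))
        (hS.mem_toFinset.2 hx0S)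
        (fun s hs => hminK s (subset_convexHull ℝ S (hS.mem_toFinset.1 hs)))
        (fun s hs heq => hSmin s (hS.mem_toFinset.1 hs) heq)
    have hmain := hasDerivAt_integral_of_dominated_loc_of_lip (μ := μ)
      (F := fun e ω => F e ω) (F' := D ε) (x₀ := ε) (bound := fun _ => L)
      (Metric.ball_mem_nhds ε one_pos) (Filter.Eventually.of_forall fun e => (hFmeas e).aestronglyMeasurable)
      hF_int (hDmeas ε).aestronglyMeasurable h_lip (integrable_const L) h_diff
    refine ⟨hmain.1, ?_⟩
    refine hmain.2.congr_of_eventuallyEq ?_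
    filter_upwards [Ioo_mem_nhds hε.1 hε.2] with e he
    refine integral_congr_ae ?_
    filter_upwards [hx e he] with ω hω
    exact hFval e ω hω.1 hω.2.1
  refine ⟨fun ε hε => ((key ε hε).2).differentiableAt, R0 * M * Mδ ^ 2 + 1, by positivity,
    min (b / 2) (-a / 2), lt_min (by linarith [h0.2]) (by linarith [h0.1]), ?_, ?_⟩
  · intro e he
    rw [Set.mem_Icc] at he
    have h1 : min (b / 2) (-a / 2) ≤ b / 2 := min_le_left _ _
    have h2 : min (b / 2) (-a / 2) ≤ -a / 2 := min_le_right _ _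
    have ha := h0.1
    have hb := h0.2
    exact ⟨by linarith [he.1], by linarith [he.2]⟩
  · intro ε hεabs
    have hεI : ε ∈ Set.Ioo a b := by
      have h1 : min (b / 2) (-a / 2) ≤ b / 2 := min_le_left _ _
      have h2 : min (b / 2) (-a / 2) ≤ -a / 2 := min_le_right _ _
      have h3 := abs_le.1 hεabs
      have ha := h0.1
      have hb := h0.2
      exact ⟨by linarith [h3.1], by linarith [h3.2]⟩
    obtain ⟨hDint, hDer⟩ := key ε hεI
    rw [hDer.deriv]
    -- integrability of the pieces
    have int1 : Integrable (fun ω => ⟪x (θ + ε • δ ω), g θ⟫) μ := by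
      refine (integrable_const (R0 * ‖g θ‖)).mono'
        ((hxm.comp (haff ε)).inner measurable_const).aestronglyMeasurable ?_
      filter_upwards [hx ε hεI] with ω hω
      rw [Real.norm_eq_abs]
      calc |⟪x (θ + ε • δ ω), g θ⟫| ≤ ‖x (θ + ε • δ ω)‖ * ‖g θ‖ := abs_real_inner_le_norm _ _
        _ ≤ R0 * ‖g θ‖ := mul_le_mul_of_nonneg_right (hR0 _ hω.1) (norm_nonneg _)
    have int2 : Integrable (fun ω => ⟪x (θ + ε • δ ω), g (θ + ε • δ ω)⟫) μ := by
      refine (integrable_const (R0 * (‖g θ‖ + M * (|ε| * Mδ)))).mono'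
        ((hxm.comp (haff ε)).inner
          ((hg.continuous.measurable).comp (haff ε))).aestronglyMeasurable ?_
      filter_upwards [hx ε hεI] with ω hω
      rw [Real.norm_eq_abs]
      calc |⟪x (θ + ε • δ ω), g (θ + ε • δ ω)⟫|
          ≤ ‖x (θ + ε • δ ω)‖ * ‖g (θ + ε • δ ω)‖ := abs_real_inner_le_norm _ _
        _ ≤ R0 * (‖g θ‖ + M * (|ε| * Mδ)) := by
            have := hgb ε ω
            have := hR0 _ hω.1
            nlinarith [norm_nonneg (x (θ + ε • δ ω)), norm_nonneg (g (θ + ε • δ ω))]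
    have int3 : Integrable (fun ω => ε * D ε ω) μ := hDint.const_mul ε
    have hsplit :
        (∫ ω, (⟪x (θ + ε • δ ω), g θ⟫ - ⟪x (θ + ε • δ ω), g (θ + ε • δ ω)⟫
              + ε * D ε ω) ∂μ)
          = (∫ ω, ⟪x (θ + ε • δ ω), g θ⟫ ∂μ)
            - (∫ ω, ⟪x (θ + ε • δ ω), g (θ + ε • δ ω)⟫ ∂μ)
            + ε * ∫ ω, D ε ω ∂μ := by
      have int12 : Integrable (fun ω => ⟪x (θ + ε • δ ω), g θ⟫
          - ⟪x (θ + ε • δ ω), g (θ + ε • δ ω)⟫) μ := int1.sub int2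
      rw [integral_add int12 int3, integral_sub int1 int2, integral_const_mul]
    rw [← hsplit]
    have hbound : ∀ᵐ ω ∂μ,
        ‖⟪x (θ + ε • δ ω), g θ⟫ - ⟪x (θ + ε • δ ω), g (θ + ε • δ ω)⟫ + ε * D ε ω‖
          ≤ (R0 * M * Mδ ^ 2 + 1) * ε ^ 2 := by
      filter_upwards [hx ε hεI] with ω hω
      set ϑ := θ + ε • δ ω with hϑ
      set w : EuclideanSpace ℝ (Fin m) := g θ - g ϑ + ε • ((fderiv ℝ g ϑ) (δ ω)) with hw
      have hinner : ⟪x ϑ, g θ⟫ - ⟪x ϑ, g ϑ⟫ + ε * D ε ω = ⟪x ϑ, w⟫ := by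
        rw [hw, inner_add_right, inner_sub_right, real_inner_smul_right]
      rw [hinner, Real.norm_eq_abs]
      -- Taylor estimate for w
      have hθϑ : θ - ϑ = -(ε • δ ω) := by rw [hϑ]; abel
      have hnθϑ : ‖θ - ϑ‖ ≤ |ε| * Mδ := by
        rw [hθϑ, norm_neg, norm_smul, Real.norm_eq_abs]
        exact mul_le_mul_of_nonneg_left (hδb ω) (abs_nonneg _)
      have htay : ‖w‖ ≤ M * (|ε| * Mδ) * (|ε| * Mδ) := by
        set f : EuclideanSpace ℝ (Fin p) → EuclideanSpace ℝ (Fin m) :=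
          fun u => g u - (fderiv ℝ g ϑ) u with hf
        have hwf : w = f θ - f ϑ := by
          have h2 : (fderiv ℝ g ϑ) θ - (fderiv ℝ g ϑ) ϑ = -(ε • (fderiv ℝ g ϑ) (δ ω)) := by
            rw [← (fderiv ℝ g ϑ).map_sub, hθϑ]
            simp
          simp only [hf, hw]
          rw [sub_sub_sub_comm, h2]
          abel
        have hdf : ∀ u ∈ segment ℝ ϑ θ, DifferentiableAt ℝ f u := fun u _ =>
          (hgdiff u).sub ((fderiv ℝ g ϑ).differentiableAt)
        have hdfb : ∀ u ∈ segment ℝ ϑ θ, ‖fderiv ℝ f u‖ ≤ M * (|ε| * Mδ) := by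
          intro u hu
          have hfder : fderiv ℝ f u = fderiv ℝ g u - fderiv ℝ g ϑ := by
            rw [hf, fderiv_fun_sub (hgdiff u) (fderiv ℝ g ϑ).differentiableAt,
              ContinuousLinearMap.fderiv]
          rw [hfder]
          have huseg : ‖u - ϑ‖ ≤ ‖θ - ϑ‖ := by
            obtain ⟨c1, c2, hc1, hc2, hc12, rfl⟩ := hu
            have : c1 • ϑ + c2 • θ - ϑ = c2 • (θ - ϑ) := by
              have hc1' : c1 = 1 - c2 := by linarith
              rw [hc1', sub_smul, one_smul, smul_sub]
              abel
            rw [this, norm_smul, Real.norm_eq_abs, abs_of_nonneg hc2]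
            nlinarith [norm_nonneg (θ - ϑ)]
          calc ‖fderiv ℝ g u - fderiv ℝ g ϑ‖ ≤ M * ‖u - ϑ‖ := hDglip u ϑ
            _ ≤ M * (|ε| * Mδ) := by
                have := huseg.trans hnθϑ
                nlinarith
        have hmvt := (convex_segment ϑ θ).norm_image_sub_le_of_norm_fderiv_le hdf hdfb
          (left_mem_segment ℝ ϑ θ) (right_mem_segment ℝ ϑ θ)
        rw [← hwf] at hmvt
        calc ‖w‖ ≤ M * (|ε| * Mδ) * ‖θ - ϑ‖ := hmvt
          _ ≤ M * (|ε| * Mδ) * (|ε| * Mδ) := by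
              have h7 : (0:ℝ) ≤ M * (|ε| * Mδ) :=
                mul_nonneg hM0 (mul_nonneg (abs_nonneg _) hMδ0)
              exact mul_le_mul_of_nonneg_left hnθϑ h7
      have hxb : ‖x ϑ‖ ≤ R0 := hR0 _ hω.1
      have habs : |⟪x ϑ, w⟫| ≤ ‖x ϑ‖ * ‖w‖ := abs_real_inner_le_norm _ _
      have hsq : |ε| * |ε| = ε ^ 2 := by rw [← abs_mul, ← sq, abs_sq]
      calc |⟪x ϑ, w⟫| ≤ ‖x ϑ‖ * ‖w‖ := habs
        _ ≤ R0 * (M * (|ε| * Mδ) * (|ε| * Mδ)) := by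
            nlinarith [norm_nonneg (x ϑ), norm_nonneg w, htay]
        _ = R0 * M * Mδ ^ 2 * ε ^ 2 := by rw [← hsq]; ring
        _ ≤ (R0 * M * Mδ ^ 2 + 1) * ε ^ 2 := by nlinarith [sq_nonneg ε]
    have := norm_integral_le_of_norm_le_const hbound
    rw [Real.norm_eq_abs] at this
    simpa using this
end
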